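/- Under the hypotheses on (v₁,…,v_d; λ₁,…,λ_d; c; a) stated in the context, for all j,k,l ∈ {1,…,n} and all fixed values of the coordinates of t other than tₗ, the function vⱼᵀ(Hess g₀)(ξ(t))vₖ tends to a finite limit as tₗ → −∞. -/

import Mathlib

open Filter

noncomputable section

/-- First directional derivative of `g` at `x` in direction `w`. -/
def pd1 {n : ℕ} (g : (Fin n → ℝ) → ℝ) (x w : Fin n → ℝ) : ℝ :=
  fderiv ℝ g x w

/-- Second derivative (Hessian bilinear form) of `g` at `x` applied to `w₁, w₂`. -/
def pd2 {n : ℕ} (g : (Fin n → ℝ) → ℝ) (x w₁ w₂ : Fin n → ℝ) : ℝ :=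
  fderiv ℝ (fun y => fderiv ℝ g y w₁) x w₂

/-- `ξ(t) = t₁ v₁ + ⋯ + tₙ vₙ`. -/
def xi {n : ℕ} (v : Fin n → (Fin n → ℝ)) (t : Fin n → ℝ) : Fin n → ℝ :=
  ∑ m, t m • v m

/-- The growth condition (∗) with data `(v₁,…,vₙ; a₁,…,aₙ)`. -/
def GrowthCondition {n : ℕ} (v : Fin n → (Fin n → ℝ)) (a : Fin n → ℝ)
    (g : (Fin n → ℝ) → ℝ) : Prop :=
  (∀ j : Fin n, ∀ t : Fin n → ℝ, ∃ L : ℝ,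
    Tendsto (fun s : ℝ =>
        2 * Real.exp (-2 * s) * (pd1 g (xi v (Function.update t j s)) (v j) + a j))
      atBot (nhds L) ∧
    Tendsto (fun s : ℝ =>
        Real.exp (-2 * s) * pd2 g (xi v (Function.update t j s)) (v j) (v j))
      atBot (nhds L)) ∧
  (∀ j k l : Fin n, ∀ t : Fin n → ℝ, ∃ L : ℝ,
    Tendsto (fun s : ℝ => pd2 g (xi v (Function.update t l s)) (v j) (v k))
      atBot (nhds L)) ∧
  (∀ j k : Fin n, j ≠ k → ∀ t : Fin n → ℝ,
    Tendsto (fun s : ℝ =>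
        Real.exp (-s - t k) * pd2 g (xi v (Function.update t j s)) (v j) (v k))
      atBot (nhds 0) ∧
    Tendsto (fun s : ℝ =>
        Real.exp (-(t j) - s) * pd2 g (xi v (Function.update t k s)) (v j) (v k))
      atBot (nhds 0))

/-- The affine-linear function `lᵢ(u) = ⟨u,vᵢ⟩ + λᵢ` (integer version). -/
def lfun {n d : ℕ} (v : Fin d → Fin n → ℤ) (lam : Fin d → ℤ) (i : Fin d)
    (u : Fin n → ℤ) : ℤ :=
  (∑ j, u j * v i j) + lam i

/-- The affine-linear function `lᵢ(x) = ⟨x,vᵢ⟩ + λᵢ` (real version). -/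
def lfunR {n d : ℕ} (v : Fin d → Fin n → ℤ) (lam : Fin d → ℤ) (i : Fin d)
    (x : Fin n → ℝ) : ℝ :=
  (∑ j, x j * (v i j : ℝ)) + (lam i : ℝ)

/-- Guillemin's potential
`g₀(ξ) = -(1/2) Σᵢ aᵢ log( (Σ_{u∈S} c_u lᵢ(u) e^{2⟨u,ξ⟩}) / (Σ_{u∈S} c_u e^{2⟨u,ξ⟩}) )`. -/
def gzero {n d : ℕ} (v : Fin d → Fin n → ℤ) (lam : Fin d → ℤ)
    (S : Finset (Fin n → ℤ)) (c : (Fin n → ℤ) → ℝ) (a : Fin d → ℤ)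
    (ξ : Fin n → ℝ) : ℝ :=
  -(1/2) * ∑ i : Fin d, (a i : ℝ) *
    Real.log ((∑ u ∈ S, c u * (lfun v lam i u : ℝ) * Real.exp (2 * ∑ m, (u m : ℝ) * ξ m)) /
      (∑ u ∈ S, c u * Real.exp (2 * ∑ m, (u m : ℝ) * ξ m)))

/-! ### Auxiliary machinery -/

namespace GzAux

/-- Limit of a ratio of exponential sums as `s → -∞`. -/
lemma tendsto_expsum_div {ι : Type*} (T T' : Finset ι) (A B : ι → ℝ) (q r : ι → ℝ) (m : ℝ)
    (hq : ∀ i ∈ T, A i ≠ 0 → m ≤ q i) (hr : ∀ i ∈ T', B i ≠ 0 → m ≤ r i)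
    (hB : (∑ i ∈ T'.filter fun i => r i = m, B i) ≠ 0) :
    Tendsto (fun s : ℝ =>
        (∑ i ∈ T, A i * Real.exp (s * q i)) / (∑ i ∈ T', B i * Real.exp (s * r i)))
      atBot
      (nhds ((∑ i ∈ T.filter fun i => q i = m, A i) /
        (∑ i ∈ T'.filter fun i => r i = m, B i))) := by
  have key : ∀ (T : Finset ι) (A q : ι → ℝ), (∀ i ∈ T, A i ≠ 0 → m ≤ q i) →
      Tendsto (fun s : ℝ => ∑ i ∈ T, A i * Real.exp (s * (q i - m))) atBot
        (nhds (∑ i ∈ T.filter fun i => q i = m, A i)) := by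
    intro T A q hq
    rw [Finset.sum_filter]
    refine tendsto_finset_sum _ fun i hi => ?_
    by_cases hA : A i = 0
    · simpa [hA] using (tendsto_const_nhds : Tendsto (fun _ : ℝ => (0:ℝ)) atBot (nhds 0))
    · rcases eq_or_lt_of_le (hq i hi hA) with h | h
      · simpa [← h] using
          (tendsto_const_nhds : Tendsto (fun _ : ℝ => A i) atBot (nhds (A i)))
      · have h1 : Tendsto (fun s : ℝ => s * (q i - m)) atBot atBot :=
          Tendsto.atBot_mul_const' (sub_pos.2 h) tendsto_id
        have h2 : Tendsto (fun s : ℝ => Real.exp (s * (q i - m))) atBot (nhds 0) :=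
          Real.tendsto_exp_atBot.comp h1
        have h3 := h2.const_mul (A i)
        simpa [h.ne'] using h3
  have hfun : ∀ s : ℝ,
      (∑ i ∈ T, A i * Real.exp (s * q i)) / (∑ i ∈ T', B i * Real.exp (s * r i))
        = (∑ i ∈ T, A i * Real.exp (s * (q i - m))) /
          (∑ i ∈ T', B i * Real.exp (s * (r i - m))) := by
    intro s
    have h1 : ∀ (T : Finset ι) (A q : ι → ℝ),
        ∑ i ∈ T, A i * Real.exp (s * q i)
          = Real.exp (s * m) * ∑ i ∈ T, A i * Real.exp (s * (q i - m)) := by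
      intro T A q
      rw [Finset.mul_sum]
      refine Finset.sum_congr rfl fun i _ => ?_
      have : Real.exp (s * q i) = Real.exp (s * m) * Real.exp (s * (q i - m)) := by
        rw [← Real.exp_add]; congr 1; ring
      rw [this]; ring
    rw [h1 T A q, h1 T' B r, mul_div_mul_left _ _ (Real.exp_ne_zero _)]
  exact Tendsto.congr (fun s => (hfun s).symm)
    ((key T A q hq).div (key T' B r hr) hB)

/-- Limit of the covariance-type ratio of exponential sums as `s → -∞`. -/
lemma tendsto_quot_aux {ι : Type*} [DecidableEq ι] (S : Finset ι) (C φ ψ b r : ι → ℝ)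
    (hC0 : ∀ u ∈ S, 0 ≤ C u) (hCne : ∃ u ∈ S, C u ≠ 0) :
    ∃ L : ℝ, Tendsto (fun s : ℝ =>
      ((∑ u ∈ S, (C u * φ u * ψ u * Real.exp (r u)) * Real.exp (s * b u)) *
         (∑ u ∈ S, (C u * Real.exp (r u)) * Real.exp (s * b u)) -
       (∑ u ∈ S, (C u * φ u * Real.exp (r u)) * Real.exp (s * b u)) *
         (∑ u ∈ S, (C u * ψ u * Real.exp (r u)) * Real.exp (s * b u))) /
      (∑ u ∈ S, (C u * Real.exp (r u)) * Real.exp (s * b u)) ^ 2)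
      atBot (nhds L) := by
  classical
  set T : Finset ι := S.filter (fun u => C u ≠ 0) with hT
  have hTne : T.Nonempty := by
    obtain ⟨u, hu, hC⟩ := hCne
    exact ⟨u, by simp [hT, hu, hC]⟩
  set β : ℝ := T.inf' hTne b with hβ
  obtain ⟨u₀, hu₀T, hu₀β⟩ := Finset.exists_mem_eq_inf' hTne b
  have hu₀S : u₀ ∈ S := (Finset.mem_filter.1 hu₀T).1
  have hu₀C : C u₀ ≠ 0 := (Finset.mem_filter.1 hu₀T).2
  have hβle : ∀ u ∈ S, C u ≠ 0 → β ≤ b u := by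
    intro u hu hC
    exact Finset.inf'_le _ (by simp [hT, hu, hC])
  set N : ι × ι → ℝ := fun p =>
    (C p.1 * φ p.1 * ψ p.1 * Real.exp (r p.1)) * (C p.2 * Real.exp (r p.2)) -
    (C p.1 * φ p.1 * Real.exp (r p.1)) * (C p.2 * ψ p.2 * Real.exp (r p.2)) with hN
  set D : ι × ι → ℝ := fun p =>
    (C p.1 * Real.exp (r p.1)) * (C p.2 * Real.exp (r p.2)) with hD
  set Q : ι × ι → ℝ := fun p => b p.1 + b p.2 with hQdef
  have hfun : ∀ s : ℝ,
      ((∑ u ∈ S, (C u * φ u * ψ u * Real.exp (r u)) * Real.exp (s * b u)) *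
         (∑ u ∈ S, (C u * Real.exp (r u)) * Real.exp (s * b u)) -
       (∑ u ∈ S, (C u * φ u * Real.exp (r u)) * Real.exp (s * b u)) *
         (∑ u ∈ S, (C u * ψ u * Real.exp (r u)) * Real.exp (s * b u))) /
      (∑ u ∈ S, (C u * Real.exp (r u)) * Real.exp (s * b u)) ^ 2
      = (∑ p ∈ S ×ˢ S, N p * Real.exp (s * Q p)) /
        (∑ p ∈ S ×ˢ S, D p * Real.exp (s * Q p)) := by
    intro s
    have hprod : ∀ (f g : ι → ℝ),
        (∑ u ∈ S, f u * Real.exp (s * b u)) * (∑ u ∈ S, g u * Real.exp (s * b u))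
          = ∑ p ∈ S ×ˢ S, (f p.1 * g p.2) * Real.exp (s * Q p) := by
      intro f g
      rw [Finset.sum_mul_sum, Finset.sum_product]
      refine Finset.sum_congr rfl fun u _ => Finset.sum_congr rfl fun u' _ => ?_
      have : Real.exp (s * Q (u, u')) = Real.exp (s * b u) * Real.exp (s * b u') := by
        rw [← Real.exp_add]; congr 1; simp [hQdef]; ring
      rw [this]; ring
    rw [hprod, hprod, sq, hprod, ← Finset.sum_sub_distrib]
    congr 1
    exact Finset.sum_congr rfl fun p _ => by rw [hN, ← sub_mul]
  have hNsupp : ∀ p ∈ S ×ˢ S, N p ≠ 0 → β + β ≤ Q p := by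
    rintro ⟨u, u'⟩ hp hNp
    rw [Finset.mem_product] at hp
    have h1 : C u ≠ 0 := by rintro h; apply hNp; simp [hN, h]
    have h2 : C u' ≠ 0 := by rintro h; apply hNp; simp [hN, h]
    exact add_le_add (hβle u hp.1 h1) (hβle u' hp.2 h2)
  have hDsupp : ∀ p ∈ S ×ˢ S, D p ≠ 0 → β + β ≤ Q p := by
    rintro ⟨u, u'⟩ hp hDp
    rw [Finset.mem_product] at hp
    have h1 : C u ≠ 0 := by rintro h; apply hDp; simp [hD, h]
    have h2 : C u' ≠ 0 := by rintro h; apply hDp; simp [hD, h]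
    exact add_le_add (hβle u hp.1 h1) (hβle u' hp.2 h2)
  have hDpos : (0:ℝ) < ∑ p ∈ (S ×ˢ S).filter fun p => Q p = β + β, D p := by
    refine Finset.sum_pos' ?_ ?_
    · rintro ⟨u, u'⟩ hp
      rw [Finset.mem_filter, Finset.mem_product] at hp
      exact mul_nonneg (mul_nonneg (hC0 u hp.1.1) (Real.exp_pos _).le)
        (mul_nonneg (hC0 u' hp.1.2) (Real.exp_pos _).le)
    · refine ⟨(u₀, u₀), ?_, ?_⟩
      · rw [Finset.mem_filter, Finset.mem_product]
        exact ⟨⟨hu₀S, hu₀S⟩, by simp [hQdef, ← hu₀β, hβ]⟩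
      · have hCpos : 0 < C u₀ := lt_of_le_of_ne (hC0 u₀ hu₀S) (Ne.symm hu₀C)
        exact mul_pos (mul_pos hCpos (Real.exp_pos _)) (mul_pos hCpos (Real.exp_pos _))
  exact ⟨_, Tendsto.congr (fun s => (hfun s).symm)
    (tendsto_expsum_div _ _ N D Q Q (β + β) hNsupp hDsupp hDpos.ne')⟩

variable {n : ℕ}

/-- `⟨u, x⟩`. -/
def ip (u : Fin n → ℤ) (x : Fin n → ℝ) : ℝ := ∑ m, (u m : ℝ) * x m

/-- `⟨u, ·⟩` as a continuous linear map. -/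
def ipL (u : Fin n → ℤ) : (Fin n → ℝ) →L[ℝ] ℝ :=
  ∑ m, (u m : ℝ) • (ContinuousLinearMap.proj m : (Fin n → ℝ) →L[ℝ] ℝ)

lemma ipL_apply (u : Fin n → ℤ) (x : Fin n → ℝ) : ipL u x = ip u x := by
  simp [ipL, ip, ContinuousLinearMap.sum_apply]

/-- Exponential sum `∑_{u ∈ S} A u e^{2⟨u,x⟩}`. -/
def ES (S : Finset (Fin n → ℤ)) (A : (Fin n → ℤ) → ℝ) (x : Fin n → ℝ) : ℝ :=
  ∑ u ∈ S, A u * Real.exp (2 * ip u x)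

/-- Fréchet derivative of `ES S A`. -/
def ESD (S : Finset (Fin n → ℤ)) (A : (Fin n → ℤ) → ℝ) (x : Fin n → ℝ) :
    (Fin n → ℝ) →L[ℝ] ℝ :=
  ∑ u ∈ S, (A u * Real.exp (2 * ip u x) * 2) • ipL u

lemma hasFDerivAt_ES (S : Finset (Fin n → ℤ)) (A : (Fin n → ℤ) → ℝ) (x : Fin n → ℝ) :
    HasFDerivAt (ES S A) (ESD S A x) x := by
  unfold ES ESD
  refine HasFDerivAt.fun_sum fun u _ => ?_
  have h0 : HasFDerivAt (fun y => ip u y) (ipL u) x := by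
    have : (fun y : Fin n → ℝ => ip u y) = ⇑(ipL u) := funext fun y => (ipL_apply u y).symm
    rw [this]; exact (ipL u).hasFDerivAt
  have h2 := ((h0.const_mul (2:ℝ)).exp).const_mul (A u)
  simpa [smul_smul, mul_assoc, mul_comm, mul_left_comm] using h2

lemma ESD_apply (S : Finset (Fin n → ℤ)) (A : (Fin n → ℤ) → ℝ) (x w : Fin n → ℝ) :
    ESD S A x w = ES S (fun u => A u * (2 * ip u w)) x := by
  simp only [ESD, ES, ContinuousLinearMap.sum_apply, ContinuousLinearMap.smul_apply,
    ipL_apply, smul_eq_mul]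
  exact Finset.sum_congr rfl fun u _ => by ring

lemma hasFDerivAt_ES_div (S : Finset (Fin n → ℤ)) (X C : (Fin n → ℤ) → ℝ)
    (x : Fin n → ℝ) (hC : ES S C x ≠ 0) :
    HasFDerivAt (fun y => ES S X y / ES S C y)
      (ES S X x • ((-(ES S C x ^ 2)⁻¹) • ESD S C x) + (ES S C x)⁻¹ • ESD S X x) x := by
  have h1 : HasFDerivAt (fun y => (ES S C y)⁻¹) ((-(ES S C x ^ 2)⁻¹) • ESD S C x) x :=
    (hasDerivAt_inv hC).comp_hasFDerivAt x (hasFDerivAt_ES S C x)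
  have h2 := (hasFDerivAt_ES S X x).fun_mul h1
  simpa [div_eq_mul_inv] using h2

/-- The covariance-type ratio of exponential sums appearing in the Hessian of `g₀`. -/
def quotES (S : Finset (Fin n → ℤ)) (c₀ : (Fin n → ℤ) → ℝ) (w₁ w₂ y : Fin n → ℝ) : ℝ :=
  (ES S (fun u => c₀ u * (2 * ip u w₁) * (2 * ip u w₂)) y * ES S c₀ y -
   ES S (fun u => c₀ u * (2 * ip u w₁)) y * ES S (fun u => c₀ u * (2 * ip u w₂)) y) /
  (ES S c₀ y) ^ 2

/-- Explicit formula for the Hessian of a log-sum-exp potential. -/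
lemma pd2_eq {d : ℕ} (S : Finset (Fin n → ℤ)) (c : (Fin n → ℤ) → ℝ) (a : Fin d → ℤ)
    (C : Fin d → (Fin n → ℤ) → ℝ) (g : (Fin n → ℝ) → ℝ)
    (hg : g = fun x => -(1/2 : ℝ) * ∑ i, (a i : ℝ) *
      (Real.log (ES S (C i) x) - Real.log (ES S c x)))
    (hpos : ∀ (i : Fin d) (x : Fin n → ℝ), 0 < ES S (C i) x)
    (hposc : ∀ x : Fin n → ℝ, 0 < ES S c x)
    (w₁ w₂ x : Fin n → ℝ) :
    pd2 g x w₁ w₂ = -(1/2 : ℝ) * ∑ i, (a i : ℝ) *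
      (quotES S (C i) w₁ w₂ x - quotES S c w₁ w₂ x) := by
  subst hg
  have hD1 : ∀ y : Fin n → ℝ, HasFDerivAt
      (fun x : Fin n → ℝ => -(1/2 : ℝ) * ∑ i, (a i : ℝ) *
        (Real.log (ES S (C i) x) - Real.log (ES S c x)))
      ((-(1/2 : ℝ)) • ∑ i : Fin d, (a i : ℝ) •
        ((ES S (C i) y)⁻¹ • ESD S (C i) y - (ES S c y)⁻¹ • ESD S c y)) y := by
    intro y
    exact HasFDerivAt.const_mul (HasFDerivAt.fun_sum fun i _ =>
      HasFDerivAt.const_mul (((hasFDerivAt_ES S (C i) y).log (hpos i y).ne').fun_sub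
        ((hasFDerivAt_ES S c y).log (hposc y).ne')) _) _
  have hfd1 : (fun y => fderiv ℝ (fun x : Fin n → ℝ => -(1/2 : ℝ) * ∑ i, (a i : ℝ) *
        (Real.log (ES S (C i) x) - Real.log (ES S c x))) y w₁)
      = fun y => -(1/2 : ℝ) * ∑ i, (a i : ℝ) *
        (ES S (fun u => C i u * (2 * ip u w₁)) y / ES S (C i) y -
         ES S (fun u => c u * (2 * ip u w₁)) y / ES S c y) := by
    funext y
    rw [(hD1 y).fderiv]
    simp only [ContinuousLinearMap.smul_apply, ContinuousLinearMap.coe_sum',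
      Finset.sum_apply, ContinuousLinearMap.sub_apply, ESD_apply, smul_eq_mul,
      div_eq_inv_mul]
  have hD2 : HasFDerivAt
      (fun y : Fin n → ℝ => -(1/2 : ℝ) * ∑ i, (a i : ℝ) *
        (ES S (fun u => C i u * (2 * ip u w₁)) y / ES S (C i) y -
         ES S (fun u => c u * (2 * ip u w₁)) y / ES S c y))
      ((-(1/2 : ℝ)) • ∑ i : Fin d, (a i : ℝ) •
        ((ES S (fun u => C i u * (2 * ip u w₁)) x • ((-(ES S (C i) x ^ 2)⁻¹) • ESD S (C i) x)
            + (ES S (C i) x)⁻¹ • ESD S (fun u => C i u * (2 * ip u w₁)) x)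
         - (ES S (fun u => c u * (2 * ip u w₁)) x • ((-(ES S c x ^ 2)⁻¹) • ESD S c x)
            + (ES S c x)⁻¹ • ESD S (fun u => c u * (2 * ip u w₁)) x))) x := by
    exact HasFDerivAt.const_mul (HasFDerivAt.fun_sum fun i _ =>
      HasFDerivAt.const_mul
        ((hasFDerivAt_ES_div S _ _ x (hpos i x).ne').fun_sub
          (hasFDerivAt_ES_div S _ _ x (hposc x).ne')) _) _
  show fderiv ℝ (fun y => fderiv ℝ _ y w₁) x w₂ = _
  rw [hfd1, hD2.fderiv]
  simp only [ContinuousLinearMap.smul_apply, ContinuousLinearMap.coe_sum',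
    Finset.sum_apply, ContinuousLinearMap.sub_apply, ContinuousLinearMap.add_apply,
    ESD_apply, smul_eq_mul]
  congr 1
  refine Finset.sum_congr rfl fun i _ => ?_
  congr 1
  have h1 : ES S (C i) x ≠ 0 := (hpos i x).ne'
  have h2 : ES S c x ≠ 0 := (hposc x).ne'
  unfold quotES
  field_simp
  ring

lemma ip_xi (u : Fin n → ℤ) (vR : Fin n → Fin n → ℝ) (t' : Fin n → ℝ) :
    ip u (xi vR t') = ∑ m, t' m * ip u (vR m) := by
  unfold ip xi
  have h1 : ∀ p, (∑ m, t' m • vR m) p = ∑ m, t' m * vR m p := by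
    intro p; simp [Finset.sum_apply]
  calc (∑ p, (u p : ℝ) * (∑ m, t' m • vR m) p)
      = ∑ p, ∑ m, t' m * ((u p : ℝ) * vR m p) := by
        refine Finset.sum_congr rfl fun p _ => ?_
        rw [h1, Finset.mul_sum]
        exact Finset.sum_congr rfl fun m _ => by ring
    _ = ∑ m, ∑ p, t' m * ((u p : ℝ) * vR m p) := Finset.sum_comm
    _ = ∑ m, t' m * ∑ p, (u p : ℝ) * vR m p := by
        exact Finset.sum_congr rfl fun m _ => (Finset.mul_sum _ _ _).symm

lemma ES_path (S : Finset (Fin n → ℤ)) (A : (Fin n → ℤ) → ℝ)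
    (vR : Fin n → Fin n → ℝ) (t : Fin n → ℝ) (l : Fin n) (s : ℝ) :
    ES S A (xi vR (Function.update t l s)) =
      ∑ u ∈ S, (A u * Real.exp (2 * ∑ m ∈ Finset.univ.erase l, t m * ip u (vR m))) *
        Real.exp (s * (2 * ip u (vR l))) := by
  unfold ES
  refine Finset.sum_congr rfl fun u _ => ?_
  have hsplit : ∑ m, (Function.update t l s) m * ip u (vR m)
      = (∑ m ∈ Finset.univ.erase l, t m * ip u (vR m)) + s * ip u (vR l) := by
    rw [← Finset.sum_erase_add _ _ (Finset.mem_univ l)]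
    congr 1
    · refine Finset.sum_congr rfl fun m hm => ?_
      rw [Function.update_of_ne (Finset.ne_of_mem_erase hm)]
    · rw [Function.update_self]
  have harg : (2:ℝ) * ip u (xi vR (Function.update t l s))
      = s * (2 * ip u (vR l)) + 2 * ∑ m ∈ Finset.univ.erase l, t m * ip u (vR m) := by
    rw [ip_xi, hsplit]; ring
  rw [harg, Real.exp_add]; ring

/-- The ratio `quotES` tends to a limit along straight paths to `-∞`. -/
lemma tendsto_quotES (S : Finset (Fin n → ℤ)) (c₀ : (Fin n → ℤ) → ℝ)
    (hC0 : ∀ u ∈ S, 0 ≤ c₀ u) (hCne : ∃ u ∈ S, c₀ u ≠ 0)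
    (w₁ w₂ : Fin n → ℝ) (vR : Fin n → Fin n → ℝ) (t : Fin n → ℝ) (l : Fin n) :
    ∃ L : ℝ, Tendsto (fun s : ℝ => quotES S c₀ w₁ w₂ (xi vR (Function.update t l s)))
      atBot (nhds L) := by
  obtain ⟨L, hL⟩ := tendsto_quot_aux S c₀ (fun u => 2 * ip u w₁) (fun u => 2 * ip u w₂)
    (fun u => 2 * ip u (vR l))
    (fun u => 2 * ∑ m ∈ Finset.univ.erase l, t m * ip u (vR m)) hC0 hCne
  refine ⟨L, hL.congr fun s => ?_⟩
  unfold quotES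
  rw [ES_path, ES_path, ES_path, ES_path]

end GzAux

/-- for all `j,k,l` and fixed values of the coordinates of `t` other than `tₗ`,
the function `vⱼᵀ(Hess g₀)(ξ(t))vₖ` tends to a finite limit as `tₗ → −∞`. -/
theorem gzero_hessian_has_limit (n d : ℕ) (hnd : n ≤ d)
    (v : Fin d → Fin n → ℤ) (lam : Fin d → ℤ)
    (S : Finset (Fin n → ℤ))
    (hS : ∀ u : Fin n → ℤ, u ∈ S ↔ ∀ i : Fin d, 0 ≤ lfun v lam i u)
    (hbdd : Bornology.IsBounded {x : Fin n → ℝ | ∀ i : Fin d, 0 ≤ lfunR v lam i x})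
    (c : (Fin n → ℤ) → ℝ) (hc : ∀ u ∈ S, 0 ≤ c u)
    (hbasis : IsUnit (Matrix.of fun j k : Fin n => v (Fin.castLE hnd j) k).det)
    (hu0 : ∃ u₀ ∈ S, 0 < c u₀ ∧
      (∀ j : Fin n, lfun v lam (Fin.castLE hnd j) u₀ = 0) ∧
      (∀ i : Fin d, n ≤ (i : ℕ) → 1 ≤ lfun v lam i u₀))
    (huk : ∀ k : Fin n, ∃ u ∈ S, 0 < c u ∧
      lfun v lam (Fin.castLE hnd k) u = 1 ∧
      (∀ j : Fin n, j ≠ k → lfun v lam (Fin.castLE hnd j) u = 0))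
    (a : Fin d → ℤ)
    (j k l : Fin n) (t : Fin n → ℝ) :
    ∃ L : ℝ,
      Tendsto (fun s : ℝ =>
          pd2 (gzero v lam S c a)
            (xi (fun m p => (v (Fin.castLE hnd m) p : ℝ)) (Function.update t l s))
            (fun p => (v (Fin.castLE hnd j) p : ℝ))
            (fun p => (v (Fin.castLE hnd k) p : ℝ)))
        atBot (nhds L) := by
  classical
  open GzAux in
  obtain ⟨u₀, hu₀S, hcu₀, hu₀n, hu₀d⟩ := hu0
  set vR : Fin n → Fin n → ℝ := fun m p => (v (Fin.castLE hnd m) p : ℝ) with hvR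
  set w₁ : Fin n → ℝ := fun p => (v (Fin.castLE hnd j) p : ℝ) with hw₁
  set w₂ : Fin n → ℝ := fun p => (v (Fin.castLE hnd k) p : ℝ) with hw₂
  set C : Fin d → (Fin n → ℤ) → ℝ := fun i u => c u * (lfun v lam i u : ℝ) with hC
  -- nonnegativity of the coefficient families on S
  have hC0 : ∀ i : Fin d, ∀ u ∈ S, 0 ≤ C i u := by
    intro i u hu
    exact mul_nonneg (hc u hu) (by exact_mod_cast (hS u).1 hu i)
  -- positive witnesses
  have hwit : ∀ i : Fin d, ∃ u ∈ S, 0 < C i u := by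
    intro i
    by_cases hi : (i : ℕ) < n
    · obtain ⟨u, huS, hcu, hl1, -⟩ := huk ⟨i, hi⟩
      have hcast : Fin.castLE hnd ⟨(i : ℕ), hi⟩ = i := by
        ext; simp
      refine ⟨u, huS, ?_⟩
      show 0 < c u * (lfun v lam i u : ℝ)
      have : lfun v lam i u = 1 := by rw [← hcast]; exact hl1
      rw [this]
      simpa using hcu
    · refine ⟨u₀, hu₀S, ?_⟩
      show 0 < c u₀ * (lfun v lam i u₀ : ℝ)
      have h1 : (1 : ℤ) ≤ lfun v lam i u₀ := hu₀d i (le_of_not_gt hi)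
      have : (0:ℝ) < (lfun v lam i u₀ : ℝ) := by exact_mod_cast lt_of_lt_of_le zero_lt_one h1
      exact mul_pos hcu₀ this
  -- positivity of exponential sums
  have hposc : ∀ x : Fin n → ℝ, 0 < ES S c x := by
    intro x
    refine Finset.sum_pos' (fun u hu => mul_nonneg (hc u hu) (Real.exp_pos _).le) ?_
    exact ⟨u₀, hu₀S, mul_pos hcu₀ (Real.exp_pos _)⟩
  have hpos : ∀ (i : Fin d) (x : Fin n → ℝ), 0 < ES S (C i) x := by
    intro i x
    refine Finset.sum_pos' (fun u hu => mul_nonneg (hC0 i u hu) (Real.exp_pos _).le) ?_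
    obtain ⟨u, huS, hCu⟩ := hwit i
    exact ⟨u, huS, mul_pos hCu (Real.exp_pos _)⟩
  -- rewrite `gzero` as a sum of differences of logarithms
  have hg : gzero v lam S c a = fun x => -(1/2 : ℝ) * ∑ i, (a i : ℝ) *
      (Real.log (ES S (C i) x) - Real.log (ES S c x)) := by
    funext x
    unfold gzero
    congr 1
    refine Finset.sum_congr rfl fun i _ => ?_
    congr 1
    have e1 : (∑ u ∈ S, c u * (lfun v lam i u : ℝ) * Real.exp (2 * ∑ m, (u m : ℝ) * x m))
        = ES S (C i) x := rfl
    have e2 : (∑ u ∈ S, c u * Real.exp (2 * ∑ m, (u m : ℝ) * x m)) = ES S c x := rfl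
    rw [e1, e2]
    exact Real.log_div (hpos i x).ne' (hposc x).ne'
  -- limits of the individual ratios
  have hch : ∀ i : Fin d, ∃ L : ℝ,
      Tendsto (fun s : ℝ => quotES S (C i) w₁ w₂ (xi vR (Function.update t l s)))
        atBot (nhds L) := by
    intro i
    refine tendsto_quotES S (C i) (hC0 i) ?_ w₁ w₂ vR t l
    obtain ⟨u, huS, hCu⟩ := hwit i
    exact ⟨u, huS, hCu.ne'⟩
  choose Li hLi using hch
  obtain ⟨Lc, hLc⟩ : ∃ L : ℝ,
      Tendsto (fun s : ℝ => quotES S c w₁ w₂ (xi vR (Function.update t l s)))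
        atBot (nhds L) :=
    tendsto_quotES S c hc ⟨u₀, hu₀S, hcu₀.ne'⟩ w₁ w₂ vR t l
  refine ⟨-(1/2 : ℝ) * ∑ i, (a i : ℝ) * (Li i - Lc), ?_⟩
  have htend : Tendsto (fun s : ℝ => -(1/2 : ℝ) * ∑ i, (a i : ℝ) *
      (quotES S (C i) w₁ w₂ (xi vR (Function.update t l s)) -
       quotES S c w₁ w₂ (xi vR (Function.update t l s))))
      atBot (nhds (-(1/2 : ℝ) * ∑ i, (a i : ℝ) * (Li i - Lc))) := by
    refine Tendsto.const_mul _ (tendsto_finset_sum _ fun i _ => ?_)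
    exact Tendsto.const_mul _ ((hLi i).sub hLc)
  refine htend.congr fun s => ?_
  exact (pd2_eq S c a C (gzero v lam S c a) hg hpos hposc w₁ w₂
    (xi vR (Function.update t l s))).symm
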